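/- Let p be a real polynomial of degree n ≥ 2 with only real zeroes, d ≥ 2 distinct zeroes, and let κ > (n−1)/n. Then F_κ[p] = p·p'' − κ(p')² has exactly 2d − 2 non-real zeroes counted with multiplicity. -/

import Mathlib

open Polynomial


lemma ms_sq_sum_nonneg (M : Multiset ℝ) : 0 ≤ (M.map (fun x => x ^ 2)).sum :=
  Multiset.sum_nonneg (by intro a ha; obtain ⟨b, _, rfl⟩ := Multiset.mem_map.mp ha; positivity)

lemma ms_cs (M : Multiset ℝ) :
    M.sum ^ 2 ≤ (Multiset.card M) * (M.map (fun x => x ^ 2)).sum := by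
  induction M using Multiset.induction_on with
  | empty => simp
  | cons u M ih =>
    by_cases hM : M = 0
    · subst hM; simp
    · have hk1 : 1 ≤ (Multiset.card M : ℝ) := by
        have := Multiset.card_pos.mpr hM
        exact_mod_cast this
      have h2 := ms_sq_sum_nonneg M
      simp only [Multiset.sum_cons, Multiset.map_cons, Multiset.card_cons]
      push_cast
      nlinarith [sq_nonneg ((Multiset.card M : ℝ) * u - M.sum), sq_nonneg M.sum]


lemma eval_prod_info (x : ℝ) (M : Multiset ℝ) (hx : ∀ r ∈ M, x - r ≠ 0) :
    eval x (M.map (fun r => X - C r)).prod ≠ 0 ∧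
    eval x (derivative (M.map (fun r => X - C r)).prod)
      = eval x (M.map (fun r => X - C r)).prod * (M.map (fun r => (x - r)⁻¹)).sum ∧
    eval x (derivative (derivative (M.map (fun r => X - C r)).prod))
      = eval x (M.map (fun r => X - C r)).prod *
        ((M.map (fun r => (x - r)⁻¹)).sum ^ 2 - (M.map (fun r => ((x - r)⁻¹) ^ 2)).sum) := by
  induction M using Multiset.induction_on with
  | empty => simp
  | cons r M ih =>
    have hr : x - r ≠ 0 := hx r (Multiset.mem_cons_self r M)
    obtain ⟨h0, h1, h2⟩ := ih (fun s hs => hx s (Multiset.mem_cons_of_mem hs))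
    simp only [Multiset.map_cons, Multiset.prod_cons, Multiset.sum_cons,
      derivative_mul, derivative_X_sub_C, one_mul, derivative_add, eval_add, eval_mul,
      eval_sub, eval_X, eval_C]
    refine ⟨mul_ne_zero (sub_ne_zero.mpr (fun h => hr (by rw [h]; ring))) h0, ?_, ?_⟩
    · rw [h1]; field_simp
    · rw [h1, h2]; field_simp; ring

lemma F_neg_off_roots (p : ℝ[X]) (n : ℕ) (hn : p.natDegree = n) (hn2 : 2 ≤ n)
    (hroots : Multiset.card p.roots = n) (κ : ℝ) (hκ : ((n : ℝ) - 1) / n < κ)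
    (x : ℝ) (hx : p.eval x ≠ 0) :
    eval x (p * derivative (derivative p) - C κ * (derivative p) ^ 2) < 0 := by
  have hp0 : p ≠ 0 := fun h => hx (by simp [h])
  have hsplit : Splits p :=
    (splits_iff_card_roots).mpr (by rw [hroots, hn])
  have hp := hsplit.eq_prod_roots
  set M := p.roots with hM
  set c := p.leadingCoeff with hc
  have hc0 : c ≠ 0 := leadingCoeff_ne_zero.mpr hp0
  have hxr : ∀ r ∈ M, x - r ≠ 0 := by
    intro r hrM h
    exact hx (by rw [show x = r by linarith [sub_eq_zero.mp h]]; exact isRoot_of_mem_roots hrM)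
  obtain ⟨h0, h1, h2⟩ := eval_prod_info x M hxr
  set P := (M.map (fun r => X - C r)).prod with hP
  set S1 := (M.map (fun r => (x - r)⁻¹)).sum with hS1
  set S2 := (M.map (fun r => ((x - r)⁻¹) ^ 2)).sum with hS2
  set E := eval x P with hE
  -- Cauchy-Schwarz
  have hCS : S1 ^ 2 ≤ (n : ℝ) * S2 := by
    have := ms_cs (M.map (fun r => (x - r)⁻¹))
    rwa [Multiset.card_map, Multiset.map_map, hroots] at this
  -- S2 > 0
  have hS2pos : 0 < S2 := by
    have hM0 : M ≠ 0 := by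
      intro h
      rw [h] at hroots; simp at hroots; omega
    obtain ⟨r, hrM⟩ := Multiset.exists_mem_of_ne_zero hM0
    have hterm : (0:ℝ) < ((x - r)⁻¹) ^ 2 := by
      have := hxr r hrM; positivity
    calc (0:ℝ) < ((x - r)⁻¹) ^ 2 := hterm
    _ ≤ S2 := by
      refine Multiset.single_le_sum ?_ _ (Multiset.mem_map_of_mem _ hrM)
      intro y hy; obtain ⟨b, _, rfl⟩ := Multiset.mem_map.mp hy; positivity
  have hnpos : (0:ℝ) < n := by
    have : (0:ℕ) < n := by omega
    exact_mod_cast this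
  have hdp : derivative p = C c * derivative P := by rw [hp, derivative_C_mul]
  have hddp : derivative (derivative p) = C c * derivative (derivative P) := by
    rw [hdp, derivative_C_mul]
  have heval : eval x (p * derivative (derivative p) - C κ * derivative p ^ 2)
      = c ^ 2 * E ^ 2 * ((1 - κ) * S1 ^ 2 - S2) := by
    rw [hddp, hdp]
    conv_lhs => rw [hp]
    simp only [eval_mul, eval_sub, eval_pow, eval_C]
    rw [h1, h2]; ring
  have hκn : (n : ℝ) - 1 < κ * n := by
    rw [div_lt_iff₀ hnpos] at hκ; linarith
  have hkey : (1 - κ) * S1 ^ 2 - S2 < 0 := by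
    rcases le_or_gt (1 - κ) 0 with h | h
    · nlinarith [sq_nonneg S1]
    · have hlt : (1 - κ) * n < 1 := by nlinarith
      have t1 : (1 - κ) * S1 ^ 2 ≤ (1 - κ) * ((n : ℝ) * S2) := by nlinarith
      have t2 : (1 - κ) * ((n : ℝ) * S2) < S2 := by
        nlinarith [mul_lt_mul_of_pos_right hlt hS2pos]
      linarith
  rw [heval]
  have hpos : 0 < c ^ 2 * E ^ 2 := by positivity
  exact mul_neg_of_pos_of_neg hpos hkey


lemma F_facts (p : ℝ[X]) (n : ℕ) (hn : p.natDegree = n) (hn2 : 2 ≤ n)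
    (κ : ℝ) (hκ : ((n : ℝ) - 1) / n < κ) :
    (p * derivative (derivative p) - C κ * (derivative p) ^ 2) ≠ 0 ∧
    (p * derivative (derivative p) - C κ * (derivative p) ^ 2).natDegree = 2 * n - 2 := by
  have hp0 : p ≠ 0 := fun h => by simp [h] at hn; omega
  set c := p.leadingCoeff with hc
  have hc0 : c ≠ 0 := leadingCoeff_ne_zero.mpr hp0
  have hnpos : (0:ℝ) < n := by exact_mod_cast (by omega : 0 < n)
  have hκn : (n : ℝ) - 1 < κ * n := by
    rw [div_lt_iff₀ hnpos] at hκ; linarith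
  have e1 : ((n - 1 : ℕ) : ℝ) = (n : ℝ) - 1 := by
    rw [Nat.cast_sub (by omega : 1 ≤ n)]; norm_num
  have e2 : ((n - 2 : ℕ) : ℝ) = (n : ℝ) - 2 := by
    rw [Nat.cast_sub (by omega : 2 ≤ n)]; norm_num
  -- coefficient facts
  have hcn : p.coeff n = c := by rw [hc, leadingCoeff, hn]
  have hc1 : (derivative p).coeff (n - 1) = c * n := by
    rw [coeff_derivative, show n - 1 + 1 = n by omega, hcn, e1]
    ring
  have hc2 : (derivative (derivative p)).coeff (n - 2) = c * n * ((n : ℝ) - 1) := by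
    rw [coeff_derivative, show n - 2 + 1 = n - 1 by omega, hc1, e2]
    ring
  have hd1 : (derivative p).natDegree = n - 1 := by
    refine le_antisymm (by simpa [hn] using natDegree_derivative_le p) ?_
    apply le_natDegree_of_ne_zero
    rw [hc1]
    exact mul_ne_zero hc0 (by exact_mod_cast (by omega : n ≠ 0))
  have hne1 : (n : ℝ) - 1 ≠ 0 := by
    have : (1:ℝ) ≤ (n:ℝ) - 1 := by
      have : (2:ℝ) ≤ n := by exact_mod_cast hn2
      linarith
    linarith
  have hd2 : (derivative (derivative p)).natDegree = n - 2 := by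
    refine le_antisymm ?_ ?_
    · calc (derivative (derivative p)).natDegree ≤ (derivative p).natDegree - 1 :=
          natDegree_derivative_le _
        _ = n - 2 := by omega
    · apply le_natDegree_of_ne_zero
      rw [hc2]
      exact mul_ne_zero (mul_ne_zero hc0 (by exact_mod_cast (by omega : n ≠ 0))) hne1
  -- leading coefficients
  have hl1 : (derivative p).leadingCoeff = c * n := by rw [leadingCoeff, hd1, hc1]
  have hl2 : (derivative (derivative p)).leadingCoeff = c * n * ((n:ℝ) - 1) := by
    rw [leadingCoeff, hd2, hc2]
  -- coefficient of F at 2n-2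
  have hco1 : (p * derivative (derivative p)).coeff (2 * n - 2) = c * (c * n * ((n:ℝ) - 1)) := by
    have h := coeff_mul_degree_add_degree p (derivative (derivative p))
    rw [hn, hd2, show n + (n - 2) = 2 * n - 2 by omega, ← hc, hl2] at h
    exact h
  have hco2 : (C κ * (derivative p) ^ 2).coeff (2 * n - 2) = κ * ((c * n) * (c * n)) := by
    have h := coeff_mul_degree_add_degree (derivative p) (derivative p)
    rw [hd1, show (n - 1) + (n - 1) = 2 * n - 2 by omega, hl1] at h
    rw [coeff_C_mul, sq, h]
  have hcoF : (p * derivative (derivative p) - C κ * (derivative p) ^ 2).coeff (2 * n - 2)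
      = c ^ 2 * ((n:ℝ) * ((n:ℝ) - 1) - κ * (n:ℝ) ^ 2) := by
    rw [coeff_sub, hco1, hco2]; ring
  have hcoFne : (p * derivative (derivative p) - C κ * (derivative p) ^ 2).coeff (2 * n - 2) ≠ 0 := by
    rw [hcoF]
    apply mul_ne_zero (pow_ne_zero 2 hc0)
    nlinarith
  have hFne : (p * derivative (derivative p) - C κ * (derivative p) ^ 2) ≠ 0 := by
    intro h; rw [h] at hcoFne; simp at hcoFne
  refine ⟨hFne, le_antisymm ?_ (le_natDegree_of_ne_zero hcoFne)⟩
  refine (natDegree_sub_le _ _).trans (max_le ?_ ?_)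
  · calc (p * derivative (derivative p)).natDegree
        ≤ p.natDegree + (derivative (derivative p)).natDegree := natDegree_mul_le
      _ = n + (n - 2) := by rw [hn, hd2]
      _ ≤ 2 * n - 2 := by omega
  · calc (C κ * (derivative p) ^ 2).natDegree
        ≤ (C κ).natDegree + ((derivative p) ^ 2).natDegree := natDegree_mul_le
      _ ≤ 0 + 2 * (derivative p).natDegree :=
          add_le_add (natDegree_C κ).le natDegree_pow_le
      _ = 2 * (n - 1) := by rw [hd1, zero_add]
      _ ≤ 2 * n - 2 := by omega


lemma F_rootMult (p : ℝ[X]) (hp : p ≠ 0) (n : ℕ) (hn : p.natDegree = n) (hn2 : 2 ≤ n)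
    (κ : ℝ) (hκ : ((n : ℝ) - 1) / n < κ)
    (hF : p * derivative (derivative p) - C κ * (derivative p) ^ 2 ≠ 0)
    (r : ℝ) (hr : p.IsRoot r) :
    rootMultiplicity r (p * derivative (derivative p) - C κ * (derivative p) ^ 2)
      = 2 * rootMultiplicity r p - 2 := by
  set F := p * derivative (derivative p) - C κ * (derivative p) ^ 2 with hFdef
  set m := rootMultiplicity r p with hm
  have hm1 : 1 ≤ m := (rootMultiplicity_pos hp).mpr hr
  obtain ⟨k, hk⟩ : ∃ k, m = k + 1 := ⟨m - 1, by omega⟩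
  obtain ⟨q, hq, hndvd⟩ := p.exists_eq_pow_rootMultiplicity_mul_and_not_dvd hp r
  rw [← hm, hk] at hq
  have hq0 : q.eval r ≠ 0 := fun h => hndvd (dvd_iff_isRoot.mpr h)
  set s : ℝ[X] := X - C r with hs
  set A : ℝ[X] := C ((k : ℝ) + 1) * q + s * derivative q with hA
  set G : ℝ[X] := C (k : ℝ) * q * A + s * q * derivative A - C κ * A ^ 2 with hG
  have h1 : derivative p = s ^ k * A := by
    rw [hq, derivative_mul, derivative_pow, derivative_X_sub_C]
    simp only [hA, Nat.add_sub_cancel]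
    push_cast
    ring
  have h2 : s * derivative (derivative p) = C (k : ℝ) * s ^ k * A + s ^ (k + 1) * derivative A := by
    rw [h1]
    rcases k with _ | j
    · simp [derivative_mul]
    · rw [derivative_mul, derivative_pow, derivative_X_sub_C]
      simp only [Nat.add_sub_cancel]
      push_cast
      ring
  have h3 : F * s = s ^ (2 * k + 1) * G := by
    have : F * s = p * (s * derivative (derivative p)) - C κ * (derivative p) ^ 2 * s := by
      rw [hFdef]; ring
    rw [this, h2, h1, hq, hG]
    ring
  -- G does not vanish at r
  have hn0 : (0:ℝ) < n := by exact_mod_cast (by omega : 0 < n)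
  have hκn : (n : ℝ) - 1 < κ * n := by rw [div_lt_iff₀ hn0] at hκ; linarith
  have hkn : (k : ℝ) + 1 ≤ n := by
    have : m ≤ p.natDegree := by
      rw [hm, ← p.count_roots]
      exact (Multiset.count_le_card r p.roots).trans p.card_roots'

    rw [hn] at this
    exact_mod_cast (by omega : k + 1 ≤ n)
  have hκk : (k : ℝ) < κ * ((k : ℝ) + 1) := by
    have hk0 : (0:ℝ) ≤ k := Nat.cast_nonneg k
    nlinarith
  have hGr : ¬ G.IsRoot r := by
    have hGe : G.eval r = (q.eval r) ^ 2 * ((k : ℝ) * ((k:ℝ) + 1) - κ * ((k:ℝ) + 1) ^ 2) := by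
      simp only [hG, hA, hs, eval_sub, eval_add, eval_mul, eval_pow, eval_C, eval_X,
        sub_self, zero_mul, mul_zero]
      ring
    intro h
    rw [IsRoot, hGe] at h
    rcases mul_eq_zero.mp h with h' | h'
    · exact hq0 ((pow_eq_zero_iff (two_ne_zero)).mp h')
    · nlinarith [hκk, Nat.cast_nonneg (α := ℝ) k]
  -- compare multiplicities
  have hs0 : s ≠ 0 := X_sub_C_ne_zero r
  have hFs : F * s ≠ 0 := mul_ne_zero hF hs0
  have e1 : rootMultiplicity r (F * s) = rootMultiplicity r F + 1 := by
    rw [rootMultiplicity_mul hFs, hs, rootMultiplicity_X_sub_C_self]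
  have e2 : rootMultiplicity r (F * s) = 2 * k + 1 := by
    rw [h3] at hFs ⊢
    rw [rootMultiplicity_mul hFs, hs, rootMultiplicity_X_sub_C_pow,
      rootMultiplicity_eq_zero hGr]
  omega


open scoped Classical in
lemma roots_filter_real (q : ℝ[X]) (hq : q ≠ 0) :
    ((q.map (algebraMap ℝ ℂ)).roots.filter (fun z => z.im = 0))
      = q.roots.map Complex.ofReal := by
  have hinj : Function.Injective (algebraMap ℝ ℂ) := (algebraMap ℝ ℂ).injective
  have hq' : q.map (algebraMap ℝ ℂ) ≠ 0 := (Polynomial.map_ne_zero_iff hinj).mpr hq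
  ext z
  rw [Multiset.count_filter]
  by_cases hz : z.im = 0
  · have hzre : ((z.re : ℝ) : ℂ) = z := Complex.ext rfl (by simp [hz])
    rw [if_pos hz, ← hzre, Multiset.count_map_eq_count' _ _ Complex.ofReal_injective,
      count_roots, count_roots]
    exact (eq_rootMultiplicity_map hinj z.re).symm
  · rw [if_neg hz]
    symm
    rw [Multiset.count_eq_zero]
    intro hmem
    obtain ⟨x, _, rfl⟩ := Multiset.mem_map.mp hmem
    exact hz (Complex.ofReal_im x)

open scoped Classical in
/-- Let `p` be a real polynomial of degree `n ≥ 2` with only real zeroes and `d ≥ 2`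
distinct zeroes, and `κ > (n−1)/n`. Then `F_κ[p] = p·p'' − κ(p')²` has exactly
`2d − 2` non-real zeroes counted with multiplicity. -/
theorem count_nonreal_roots_F_kappa_gt (p : ℝ[X]) (n d : ℕ) (hn : p.natDegree = n)
    (hn2 : 2 ≤ n)
    (hreal : ∀ z : ℂ, (p.map (algebraMap ℝ ℂ)).IsRoot z → z.im = 0)
    (hd : p.roots.toFinset.card = d) (hd2 : 2 ≤ d)
    (κ : ℝ) (hκ : ((n : ℝ) - 1) / n < κ) :
    Multiset.card
      (((p * derivative (derivative p) - C κ * (derivative p) ^ 2).map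
          (algebraMap ℝ ℂ)).roots.filter (fun z => z.im ≠ 0)) = 2 * d - 2 := by
  have hp0 : p ≠ 0 := fun h => by simp [h] at hn; omega
  have hinj : Function.Injective (algebraMap ℝ ℂ) := (algebraMap ℝ ℂ).injective
  set F := p * derivative (derivative p) - C κ * (derivative p) ^ 2 with hFdef
  obtain ⟨hF0, hFdeg⟩ := F_facts p n hn hn2 κ hκ
  -- number of complex roots of a real polynomial
  have card_croots : ∀ q : ℝ[X], q ≠ 0 →
      Multiset.card ((q.map (algebraMap ℝ ℂ)).roots) = q.natDegree := by
    intro q hq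
    have hq' : q.map (algebraMap ℝ ℂ) ≠ 0 := (Polynomial.map_ne_zero_iff hinj).mpr hq
    have hsp : Splits (q.map (algebraMap ℝ ℂ)) :=
      IsAlgClosed.splits _
    rw [splits_iff_card_roots.mp hsp, natDegree_map_eq_of_injective hinj]
  -- p has n real roots
  have hroots_card : Multiset.card p.roots = n := by
    have h1 := roots_filter_real p hp0
    have h2 : ((p.map (algebraMap ℝ ℂ)).roots.filter (fun z => z.im = 0))
        = (p.map (algebraMap ℝ ℂ)).roots :=
      Multiset.filter_eq_self.mpr (fun z hz => hreal z (isRoot_of_mem_roots hz))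
    have := congrArg Multiset.card (h1.symm.trans h2)
    rwa [Multiset.card_map, card_croots p hp0, hn] at this
  -- every real root of F is a root of p
  have hFroot_sub : ∀ r : ℝ, F.IsRoot r → p.IsRoot r := by
    intro r hr
    by_contra hpr
    have := F_neg_off_roots p n hn hn2 hroots_card κ hκ r hpr
    rw [← hFdef] at this
    rw [IsRoot] at hr
    linarith [this, hr.ge.trans_eq hr]
  -- real roots of F counted with multiplicity
  have hFroots_card : Multiset.card F.roots = 2 * n - 2 * d := by
    rw [← Multiset.toFinset_sum_count_eq]
    have hsub : F.roots.toFinset ⊆ p.roots.toFinset := by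
      intro r hr
      rw [Multiset.mem_toFinset] at hr ⊢
      exact mem_roots'.mpr ⟨hp0, hFroot_sub r (isRoot_of_mem_roots hr)⟩
    rw [Finset.sum_subset hsub (fun r _ hnot => by
      rw [Multiset.count_eq_zero]
      exact fun hmem => hnot (Multiset.mem_toFinset.mpr hmem))]
    have hterm : ∀ r ∈ p.roots.toFinset,
        F.roots.count r = 2 * p.roots.count r - 2 := by
      intro r hr
      rw [count_roots, count_roots]
      exact F_rootMult p hp0 n hn hn2 κ hκ hF0 r
        (isRoot_of_mem_roots (Multiset.mem_toFinset.mp hr))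
    rw [Finset.sum_congr rfl hterm]
    have hge : ∀ r ∈ p.roots.toFinset, 2 ≤ 2 * p.roots.count r := by
      intro r hr
      have : 1 ≤ p.roots.count r := by
        rw [Nat.one_le_iff_ne_zero, Ne, Multiset.count_eq_zero]
        simpa [Multiset.mem_toFinset] using hr
      omega
    rw [Finset.sum_tsub_distrib _ hge, ← Finset.mul_sum, Multiset.toFinset_sum_count_eq,
      hroots_card, Finset.sum_const, hd, smul_eq_mul]
    omega
  have hcard_all : Multiset.card ((F.map (algebraMap ℝ ℂ)).roots) = 2 * n - 2 := by
    rw [card_croots F hF0, hFdeg]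
  have hfilter_eq : ((F.map (algebraMap ℝ ℂ)).roots.filter (fun z => z.im = 0))
      = F.roots.map Complex.ofReal := roots_filter_real F hF0
  have hc := congrArg Multiset.card
    (Multiset.filter_add_not (fun z => z.im = 0) ((F.map (algebraMap ℝ ℂ)).roots))
  rw [Multiset.card_add, hfilter_eq, Multiset.card_map, hFroots_card, hcard_all] at hc
  have hdn : d ≤ n := by
    calc d = p.roots.toFinset.card := hd.symm
      _ ≤ Multiset.card p.roots := Multiset.toFinset_card_le _
      _ = n := hroots_card
  have hpred : ((F.map (algebraMap ℝ ℂ)).roots.filter (fun z => z.im ≠ 0))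
      = ((F.map (algebraMap ℝ ℂ)).roots.filter (fun z => ¬ z.im = 0)) :=
    Multiset.filter_congr (fun z _ => Iff.rfl)
  rw [hpred]
  omega
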